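/- In a graded 2D open-closed TQFT with closed sector (C, μ_C, λ_C, η_C, ε_C) and open sector (A, μ_A, λ_A, η_A, ε_A), zipper ζ : C → A and cozipper ζ* : A → C, assuming relations (1) both sectors are biunital coFrobenius bialgebras, (3) ζ is an algebra map, and (5) (1⊗ζ)c_C = (ζ*⊗1)c_A, the cozipper is a coalgebra map: (ζ*⊗ζ*)λ_A = (-1)^{|ζ*||λ_A|} λ_C ζ* and ε_A = ε_C ζ*. -/

import Mathlib

open TensorProduct LinearMap
open scoped TensorProduct DirectSum

namespace GradedCoFrob

variable {R : Type} [CommRing R] {M : Type} [AddCommGroup M] [Module R M]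

/-- The Koszul sign `(-1)^n` for `n : ℤ`. -/
def ksign (n : ℤ) : ℤ := (((-1 : ℤˣ) ^ n : ℤˣ) : ℤ)

variable (𝒜 : ℤ → Submodule R M) [DirectSum.Decomposition 𝒜]

/-- Build a linear map `M →ₗ N` out of its values on the homogeneous pieces,
bundled linearly in the family of values. -/
noncomputable def fromPiecesHom {N : Type} [AddCommGroup N] [Module R N] :
    (∀ i : ℤ, 𝒜 i →ₗ[R] N) →ₗ[R] (M →ₗ[R] N) :=
  (LinearMap.lcomp R N (DirectSum.decomposeLinearEquiv 𝒜).toLinearMap).comp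
    (DFinsupp.lsum R (M := fun i => 𝒜 i) (N := N)).toLinearMap

/-- Build a linear map `M →ₗ N` out of its values on the homogeneous pieces. -/
noncomputable def fromPieces {N : Type} [AddCommGroup N] [Module R N]
    (f : ∀ i : ℤ, 𝒜 i →ₗ[R] N) : M →ₗ[R] N :=
  fromPiecesHom 𝒜 f

/-- Build a bilinear map `M →ₗ M →ₗ N` out of its values on pairs of homogeneous pieces. -/
noncomputable def fromPieces₂ {N : Type} [AddCommGroup N] [Module R N]
    (f : ∀ i j : ℤ, 𝒜 i →ₗ[R] 𝒜 j →ₗ[R] N) : M →ₗ[R] M →ₗ[R] N :=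
  fromPieces 𝒜 (fun i => (fromPiecesHom 𝒜).comp (LinearMap.pi (fun j => f i j)))

/-- The operator multiplying the degree `i` component by the Koszul sign `(-1)^(d*i)`. -/
noncomputable def signAction (d : ℤ) : M →ₗ[R] M :=
  fromPieces 𝒜 (fun i => ksign (d * i) • (𝒜 i).subtype)

/-- The Koszul twist `τ(a ⊗ b) = (-1)^{|a||b|} b ⊗ a`. -/
noncomputable def twist : M ⊗[R] M →ₗ[R] M ⊗[R] M :=
  TensorProduct.lift (fromPieces₂ 𝒜 (fun i j =>
    ksign (i * j) • ((((TensorProduct.mk R M M).flip).comp (𝒜 i).subtype).compl₂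
      (𝒜 j).subtype)))

/-- Left contraction `(f ⊗ 1)(x ⊗ y) = f(x) • y` (no Koszul sign since `1` has degree `0`). -/
noncomputable def contrL {N : Type} [AddCommGroup N] [Module R N]
    (f : N →ₗ[R] R) : N ⊗[R] M →ₗ[R] M :=
  TensorProduct.lift ((LinearMap.lsmul R M).comp f)

/-- Right contraction with Koszul sign:
`(1 ⊗ f)(x ⊗ y) = (-1)^{d|x|} f(y) • x` where `d` is the degree of `f`. -/
noncomputable def contrR {N : Type} [AddCommGroup N] [Module R N]
    (f : N →ₗ[R] R) (d : ℤ) : M ⊗[R] N →ₗ[R] M :=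
  TensorProduct.lift ((((LinearMap.lsmul R M).comp f).flip).comp (signAction 𝒜 d))

/-- Koszul-signed evaluation of a pair of functionals on a tensor:
`(x ⊗ y) ↦ f((-1)^{d₁|x|} x) * g((-1)^{d₂|y|} y)`. -/
noncomputable def ev2 (f g : M →ₗ[R] R) (d₁ d₂ : ℤ) : M ⊗[R] M →ₗ[R] R :=
  TensorProduct.lift (((LinearMap.mul R R).comp (f.comp (signAction 𝒜 d₁))).compl₂
    (g.comp (signAction 𝒜 d₂)))

/-- The map `c⃗ : A^∨ → A`, `f ↦ (-1)^{|f||c|}(f ⊗ 1)c`, implemented by putting the sign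
`(-1)^{dc |x|}` on the first tensor factor of the copairing `c` (of degree `dc`). -/
noncomputable def cvec (c : M ⊗[R] M) (dc : ℤ) : (M →ₗ[R] R) →ₗ[R] M :=
  (LinearMap.applyₗ ((LinearMap.rTensor M (signAction 𝒜 dc)) c)).comp
    ((TensorProduct.lift.equiv (RingHom.id R) M M M).toLinearMap.comp
      (LinearMap.llcomp R M R (M →ₗ[R] M) (LinearMap.lsmul R M)))

/-- The operation `(1 ⊗ c ⊗ 1) : A ⊗ A → (A ⊗ A) ⊗ (A ⊗ A)`,
`a ⊗ b ↦ (-1)^{|c||a|} (a ⊗ c₁) ⊗ (c₂ ⊗ b)` for a copairing `c` of degree `dc`. -/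
noncomputable def midIns (c : M ⊗[R] M) (dc : ℤ) :
    M ⊗[R] M →ₗ[R] (M ⊗[R] M) ⊗[R] (M ⊗[R] M) :=
  (TensorProduct.assoc R (M ⊗[R] M) M M).toLinearMap.comp
    (LinearMap.rTensor M
      (((TensorProduct.assoc R M M M).symm.toLinearMap).comp
        (((TensorProduct.mk R M (M ⊗[R] M)).flip c).comp (signAction 𝒜 dc))))

/-- The Koszul-signed cyclic permutation `σ(a⊗b⊗c) = (-1)^{(|a|+|b|)|c|} c⊗a⊗b`. -/
noncomputable def cyc : (M ⊗[R] M) ⊗[R] M →ₗ[R] (M ⊗[R] M) ⊗[R] M :=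
  (LinearMap.rTensor M (twist 𝒜)).comp
    ((TensorProduct.assoc R M M M).symm.toLinearMap.comp
      ((LinearMap.lTensor M (twist 𝒜)).comp (TensorProduct.assoc R M M M).toLinearMap))

/-- The submodule `A_i ⊗ A_j ⊆ A ⊗ A`. -/
noncomputable def tpiece (i j : ℤ) : Submodule R (M ⊗[R] M) :=
  LinearMap.range (TensorProduct.map (𝒜 i).subtype (𝒜 j).subtype)

/-- The degree `k` part `⨁_{i+j=k} A_i ⊗ A_j` of `A ⊗ A`. -/
noncomputable def tgrade (k : ℤ) : Submodule R (M ⊗[R] M) :=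
  ⨆ i : ℤ, tpiece 𝒜 i (k - i)

/-- A product is homogeneous of degree `d`. -/
def IsHomogProd (d : ℤ) (mu : M ⊗[R] M →ₗ[R] M) : Prop :=
  ∀ i j : ℤ, ∀ x ∈ 𝒜 i, ∀ y ∈ 𝒜 j, mu (x ⊗ₜ[R] y) ∈ 𝒜 (i + j + d)

/-- A coproduct is homogeneous of degree `d`. -/
def IsHomogCoprod (d : ℤ) (lam : M →ₗ[R] M ⊗[R] M) : Prop :=
  ∀ k : ℤ, ∀ x ∈ 𝒜 k, lam x ∈ tgrade 𝒜 (k + d)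

/-- A scalar-valued functional is homogeneous of degree `d`. -/
def IsHomogFun (d : ℤ) (f : M →ₗ[R] R) : Prop :=
  ∀ i : ℤ, i ≠ -d → ∀ x ∈ 𝒜 i, f x = 0

/-- A pairing is homogeneous of degree `d`. -/
def IsHomogPairing (d : ℤ) (p : M ⊗[R] M →ₗ[R] R) : Prop :=
  ∀ i j : ℤ, i + j ≠ -d → ∀ x ∈ 𝒜 i, ∀ y ∈ 𝒜 j, p (x ⊗ₜ[R] y) = 0

end GradedCoFrob
namespace GradedCoFrob

/-- A unital coFrobenius bialgebra structure on a ℤ-graded module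
(Definition `defi:coFrobenius-unital-bialgebra`), with all Koszul sign conventions explicit. -/
structure UnitalCoFrob (R : Type) [CommRing R] {M : Type} [AddCommGroup M] [Module R M]
    (𝒜 : ℤ → Submodule R M) [DirectSum.Decomposition 𝒜] where
  mu : M ⊗[R] M →ₗ[R] M
  lam : M →ₗ[R] M ⊗[R] M
  unit : M
  dm : ℤ
  dl : ℤ
  mu_homog : IsHomogProd 𝒜 dm mu
  lam_homog : IsHomogCoprod 𝒜 dl lam
  unit_homog : unit ∈ 𝒜 (-dm)
  /-- graded associativity `μ(μ⊗1) = (-1)^{|μ|} μ(1⊗μ)` -/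
  mu_assoc : mu.comp (LinearMap.rTensor M mu) =
    ksign dm • (mu.comp ((TensorProduct.map (signAction 𝒜 dm) mu).comp
      (TensorProduct.assoc R M M M).toLinearMap))
  /-- `(-1)^{|μ|} μ(η ⊗ 1) = 1` -/
  unit_left : ksign dm • (mu.comp ((TensorProduct.mk R M M) unit)) = LinearMap.id
  /-- `μ(1 ⊗ η) = 1` -/
  unit_right : mu.comp (((TensorProduct.mk R M M).flip unit).comp (signAction 𝒜 (-dm))) =
    LinearMap.id
  cop : M ⊗[R] M
  /-- the copairing `c = (-1)^{|λ||μ|+|μ|} λη` -/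
  cop_def : cop = ksign (dl * dm + dm) • lam unit
  /-- `λ = (1⊗μ)(c⊗1)` -/
  cofrob_left : lam = (TensorProduct.map (signAction 𝒜 dm) mu).comp
    ((TensorProduct.assoc R M M M).toLinearMap.comp (TensorProduct.mk R (M ⊗[R] M) M cop))
  /-- `λ = (-1)^{|μ|}(μ⊗1)(1⊗c)` -/
  cofrob_right : lam = ksign dm • ((LinearMap.rTensor M mu).comp
    ((TensorProduct.assoc R M M M).symm.toLinearMap.comp
      (((TensorProduct.mk R M (M ⊗[R] M)).flip cop).comp (signAction 𝒜 (dl - dm)))))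
  /-- `τc = (-1)^{|λ|} c` -/
  cop_symm : twist 𝒜 cop = ksign dl • cop

/-- A biunital coFrobenius bialgebra structure on a ℤ-graded module
(Definition `defi:biunital-coFrobenius-bialgebra`), with all Koszul sign conventions explicit. -/
structure BiunitalCoFrob (R : Type) [CommRing R] {M : Type} [AddCommGroup M] [Module R M]
    (𝒜 : ℤ → Submodule R M) [DirectSum.Decomposition 𝒜] where
  mu : M ⊗[R] M →ₗ[R] M
  lam : M →ₗ[R] M ⊗[R] M
  unit : M
  counit : M →ₗ[R] R
  dm : ℤ
  dl : ℤ
  mu_homog : IsHomogProd 𝒜 dm mu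
  lam_homog : IsHomogCoprod 𝒜 dl lam
  unit_homog : unit ∈ 𝒜 (-dm)
  counit_homog : IsHomogFun 𝒜 (-dl) counit
  mu_assoc : mu.comp (LinearMap.rTensor M mu) =
    ksign dm • (mu.comp ((TensorProduct.map (signAction 𝒜 dm) mu).comp
      (TensorProduct.assoc R M M M).toLinearMap))
  /-- graded coassociativity `(λ⊗1)λ = (-1)^{|λ|}(1⊗λ)λ` -/
  lam_coassoc : (LinearMap.rTensor M lam).comp lam =
    ksign dl • ((TensorProduct.assoc R M M M).symm.toLinearMap.comp
      ((TensorProduct.map (signAction 𝒜 dl) lam).comp lam))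
  unit_left : ksign dm • (mu.comp ((TensorProduct.mk R M M) unit)) = LinearMap.id
  unit_right : mu.comp (((TensorProduct.mk R M M).flip unit).comp (signAction 𝒜 (-dm))) =
    LinearMap.id
  /-- `(ε⊗1)λ = 1` -/
  counit_left : (contrL counit).comp lam = LinearMap.id
  /-- `(-1)^{|λ|}(1⊗ε)λ = 1` -/
  counit_right : ksign dl • ((contrR 𝒜 counit (-dl)).comp lam) = LinearMap.id
  cop : M ⊗[R] M
  cop_def : cop = ksign (dl * dm + dm) • lam unit
  pr : M ⊗[R] M →ₗ[R] R
  /-- the pairing `p = (-1)^{|λ|} εμ` -/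
  pr_def : pr = ksign dl • (counit.comp mu)
  cofrob_left : lam = (TensorProduct.map (signAction 𝒜 dm) mu).comp
    ((TensorProduct.assoc R M M M).toLinearMap.comp (TensorProduct.mk R (M ⊗[R] M) M cop))
  cofrob_right : lam = ksign dm • ((LinearMap.rTensor M mu).comp
    ((TensorProduct.assoc R M M M).symm.toLinearMap.comp
      (((TensorProduct.mk R M (M ⊗[R] M)).flip cop).comp (signAction 𝒜 (dl - dm)))))
  /-- `μ = (-1)^{|μ||λ|+|λ|}(p⊗1)(1⊗λ)` -/
  cofrob_pr_left : mu = ksign (dm * dl + dl) • ((contrL pr).comp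
    ((TensorProduct.assoc R M M M).symm.toLinearMap.comp
      (TensorProduct.map (signAction 𝒜 dl) lam)))
  /-- `μ = (-1)^{|μ||λ|}(1⊗p)(λ⊗1)` -/
  cofrob_pr_right : mu = ksign (dm * dl) • ((contrR 𝒜 pr (dm - dl)).comp
    ((TensorProduct.assoc R M M M).toLinearMap.comp (LinearMap.rTensor M lam)))
  cop_symm : twist 𝒜 cop = ksign dl • cop
  /-- `pτ = (-1)^{|μ|} p` -/
  pr_symm : pr.comp (twist 𝒜) = ksign dm • pr

end GradedCoFrob

namespace GradedCoFrob
section Infra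
variable {R : Type} [CommRing R] {M : Type} [AddCommGroup M] [Module R M]
variable (𝒜 : ℤ → Submodule R M) [DirectSum.Decomposition 𝒜]

lemma ksign_add (a b : ℤ) : ksign (a+b) = ksign a * ksign b := by
  unfold ksign; rw [zpow_add]; push_cast; ring

lemma ksign_zero : ksign 0 = 1 := rfl

lemma ksign_neg (a : ℤ) : ksign (-a) = ksign a := by
  unfold ksign; rw [zpow_neg]; norm_num

lemma ksign_two_mul (a : ℤ) : ksign (2*a) = 1 := by
  unfold ksign
  have : ((-1 : ℤˣ)^(2:ℤ)) = 1 := by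
    rw [show (2:ℤ) = ((2:ℕ):ℤ) by norm_num, zpow_natCast]; exact neg_one_sq
  rw [zpow_mul, this, one_zpow]; rfl

lemma ksign_mul_self (a : ℤ) : ksign a * ksign a = 1 := by
  rw [← ksign_add, ← two_mul]; exact ksign_two_mul a

lemma ksign_congr {a b : ℤ} (h : ∃ m, a - b = 2*m) : ksign a = ksign b := by
  obtain ⟨m, hm⟩ := h
  have : a = 2*m + b := by omega
  rw [this, ksign_add, ksign_two_mul, one_mul]

lemma ksign_zmod {a b : ℤ} (h : (a : ZMod 2) = (b : ZMod 2)) : ksign a = ksign b := by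
  apply ksign_congr
  have h0 : ((a - b : ℤ) : ZMod 2) = 0 := by push_cast; rw [h]; ring
  obtain ⟨m, hm⟩ := (ZMod.intCast_zmod_eq_zero_iff_dvd _ 2).mp h0
  exact ⟨m, hm⟩

lemma ksign_one_zmod {a : ℤ} (h : (a : ZMod 2) = 0) : ksign a = 1 := by
  have : ksign a = ksign 0 := ksign_zmod (by rw [h]; norm_num)
  rw [this, ksign_zero]

lemma smul_smul_ksign {a b : ℤ} (x : M) :
    ksign a • ksign b • x = ksign (a + b) • x := by
  rw [smul_smul, ← ksign_add]

lemma ksign_cancel {a : ℤ} {x y : M} (h : x = ksign a • y) : y = ksign a • x := by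
  rw [h, smul_smul_ksign, ksign_congr (a := a + a) (b := 0) ⟨a, by ring⟩, ksign_zero, one_smul]

lemma fromPieces_of_mem {N : Type} [AddCommGroup N] [Module R N]
    (f : ∀ i : ℤ, 𝒜 i →ₗ[R] N) {i : ℤ} {x : M} (hx : x ∈ 𝒜 i) :
    fromPieces 𝒜 f x = f i ⟨x, hx⟩ := by
  unfold fromPieces fromPiecesHom
  simp only [LinearMap.comp_apply, LinearEquiv.coe_coe, LinearMap.lcomp_apply,
    DirectSum.decomposeLinearEquiv_apply, DirectSum.decompose_of_mem _ hx]
  erw [DFinsupp.lsum_single]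

lemma signAction_of_mem {d i : ℤ} {x : M} (hx : x ∈ 𝒜 i) :
    signAction 𝒜 d x = ksign (d*i) • x := by
  unfold signAction
  rw [fromPieces_of_mem 𝒜 _ hx]
  rfl

lemma hom_ext_homog {N : Type} [AddCommGroup N] [Module R N] {f g : M →ₗ[R] N}
    (h : ∀ i : ℤ, ∀ x ∈ 𝒜 i, f x = g x) : f = g := by
  classical
  ext x
  rw [← DirectSum.sum_support_decompose 𝒜 x, map_sum, map_sum]
  exact Finset.sum_congr rfl fun i _ => h i _ (SetLike.coe_mem _)

lemma signAction_zero : signAction 𝒜 (0:ℤ) = LinearMap.id := by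
  apply hom_ext_homog 𝒜
  intro i x hx
  rw [signAction_of_mem 𝒜 hx]
  simp [ksign_zero]

lemma contrL_tmul {N : Type} [AddCommGroup N] [Module R N]
    (f : N →ₗ[R] R) (x : N) (y : M) : contrL (M := M) f (x ⊗ₜ[R] y) = f x • y := by
  simp [contrL]

lemma contrR_tmul {N : Type} [AddCommGroup N] [Module R N]
    (f : N →ₗ[R] R) (d : ℤ) (x : M) (y : N) :
    contrR 𝒜 f d (x ⊗ₜ[R] y) = f y • signAction 𝒜 d x := by
  simp [contrR]

lemma contrR_comp_lTensor {N N' : Type} [AddCommGroup N] [Module R N]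
    [AddCommGroup N'] [Module R N'] (f : N →ₗ[R] R) (d : ℤ) (g : N' →ₗ[R] N) :
    (contrR 𝒜 f d).comp (LinearMap.lTensor M g) = contrR 𝒜 (f.comp g) d := by
  apply TensorProduct.ext'
  intro x y
  simp [contrR_tmul]

lemma contrL_comp_rTensor {N N' : Type} [AddCommGroup N] [Module R N]
    [AddCommGroup N'] [Module R N'] (f : N →ₗ[R] R) (g : N' →ₗ[R] N) :
    (contrL (M := M) f).comp (LinearMap.rTensor M g) = contrL (f.comp g) := by
  apply TensorProduct.ext'
  intro x y
  simp [contrL_tmul]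

lemma contrR_zsmul {N : Type} [AddCommGroup N] [Module R N]
    (f : N →ₗ[R] R) (d s : ℤ) :
    contrR 𝒜 (s • f) d = s • contrR 𝒜 f d := by
  apply TensorProduct.ext'
  intro x y
  simp only [contrR_tmul, LinearMap.smul_apply]
  rw [smul_assoc]

lemma contrL_zsmul {N : Type} [AddCommGroup N] [Module R N]
    (f : N →ₗ[R] R) (s : ℤ) :
    contrL (M := M) (s • f) = s • contrL (M := M) f := by
  apply TensorProduct.ext'
  intro x y
  simp only [contrL_tmul, LinearMap.smul_apply]
  rw [smul_assoc]

lemma assoc_tmul_lTensor (t : M ⊗[R] M) (w : M) :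
    (TensorProduct.assoc R M M M) (t ⊗ₜ[R] w)
      = LinearMap.lTensor M ((TensorProduct.mk R M M).flip w) t := by
  induction t using TensorProduct.induction_on with
  | zero => simp
  | tmul x y => simp
  | add u v hu hv => rw [add_tmul, map_add, map_add, hu, hv]

lemma tgrade_induction {k : ℤ} {P : M ⊗[R] M → Prop} {c : M ⊗[R] M}
    (hc : c ∈ tgrade 𝒜 k) (h0 : P 0) (hadd : ∀ u v, P u → P v → P (u+v))
    (htmul : ∀ j : ℤ, ∀ x ∈ 𝒜 j, ∀ y ∈ 𝒜 (k-j), P (x ⊗ₜ[R] y)) : P c := by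
  have hc' : c ∈ ⨆ j : ℤ, tpiece 𝒜 j (k-j) := hc
  refine Submodule.iSup_induction (motive := P) (p := fun j => tpiece 𝒜 j (k-j)) hc' ?_ h0 hadd
  intro j t ht
  obtain ⟨s, rfl⟩ := ht
  induction s using TensorProduct.induction_on with
  | zero => simpa using h0
  | tmul x y => simpa using htmul j x x.2 y y.2
  | add u v hu hv => rw [map_add]; exact hadd _ _ hu hv

end Infra
end GradedCoFrob

namespace GradedCoFrob
section Aux
variable {R : Type} [CommRing R] {M : Type} [AddCommGroup M] [Module R M]
variable (𝒜 : ℤ → Submodule R M) [DirectSum.Decomposition 𝒜]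

lemma tensor_ext_homog {N P : Type} [AddCommGroup N] [Module R N]
    [AddCommGroup P] [Module R P] {f g : M ⊗[R] N →ₗ[R] P}
    (h : ∀ i : ℤ, ∀ x ∈ 𝒜 i, ∀ y : N, f (x ⊗ₜ[R] y) = g (x ⊗ₜ[R] y)) : f = g := by
  apply TensorProduct.ext
  apply hom_ext_homog 𝒜
  intro i x hx
  ext y
  exact h i x hx y

lemma aux_lam_eq (B : BiunitalCoFrob R 𝒜) (hdm : B.dm = 0) (x : M) :
    B.lam x = LinearMap.lTensor M B.mu ((TensorProduct.assoc R M M M) (B.cop ⊗ₜ[R] x)) := by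
  conv_lhs => rw [B.cofrob_left]
  rw [hdm, signAction_zero]
  rfl

lemma aux_unit_mul (B : BiunitalCoFrob R 𝒜) (hdm : B.dm = 0) (a : M) :
    B.mu (B.unit ⊗ₜ[R] a) = a := by
  have h := LinearMap.congr_fun B.unit_left a
  rw [hdm] at h
  simpa [ksign_zero] using h

lemma aux_p_homog (B : BiunitalCoFrob R 𝒜) (hdm : B.dm = 0) :
    ∀ i j : ℤ, i + j ≠ B.dl → ∀ x ∈ 𝒜 i, ∀ y ∈ 𝒜 j, B.pr (x ⊗ₜ[R] y) = 0 := by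
  intro i j hij x hx y hy
  have hmu := B.mu_homog i j x hx y hy
  rw [hdm, add_zero] at hmu
  rw [B.pr_def]
  simp only [LinearMap.smul_apply, LinearMap.comp_apply]
  rw [B.counit_homog (i+j) (by omega) _ hmu, smul_zero]

lemma aux_mu_assoc (B : BiunitalCoFrob R 𝒜) (hdm : B.dm = 0) (z x w : M) :
    B.mu (B.mu (z ⊗ₜ[R] x) ⊗ₜ[R] w) = B.mu (z ⊗ₜ[R] B.mu (x ⊗ₜ[R] w)) := by
  have h := LinearMap.congr_fun B.mu_assoc ((z ⊗ₜ[R] x) ⊗ₜ[R] w)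
  rw [hdm] at h
  simpa [ksign_zero, signAction_zero] using h

lemma aux_p_assoc (B : BiunitalCoFrob R 𝒜) (hdm : B.dm = 0) (z x w : M) :
    B.pr (z ⊗ₜ[R] B.mu (x ⊗ₜ[R] w)) = B.pr (B.mu (z ⊗ₜ[R] x) ⊗ₜ[R] w) := by
  rw [B.pr_def]
  simp only [LinearMap.smul_apply, LinearMap.comp_apply]
  rw [← aux_mu_assoc 𝒜 B hdm]

lemma aux_cm (B : BiunitalCoFrob R 𝒜) :
    B.counit.comp B.mu = ksign B.dl • B.pr := by
  rw [B.pr_def, smul_smul, ksign_mul_self, one_smul]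

lemma aux_snake2 (B : BiunitalCoFrob R 𝒜) (hdm : B.dm = 0) (w : M) :
    contrR 𝒜 B.pr (-B.dl) ((TensorProduct.assoc R M M M) (B.cop ⊗ₜ[R] w)) = w := by
  have h := LinearMap.congr_fun B.counit_right w
  rw [LinearMap.smul_apply, LinearMap.comp_apply, aux_lam_eq 𝒜 B hdm,
    ← LinearMap.comp_apply (contrR 𝒜 B.counit (-B.dl)), contrR_comp_lTensor,
    aux_cm, contrR_zsmul, LinearMap.smul_apply, smul_smul_ksign,
    ksign_congr (a := B.dl + B.dl) (b := 0) ⟨B.dl, by ring⟩, ksign_zero, one_smul] at h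
  exact h

lemma aux_snake1 (B : BiunitalCoFrob R 𝒜) (hdm : B.dm = 0) :
    ∀ i : ℤ, ∀ z ∈ 𝒜 i,
      contrL B.pr ((TensorProduct.assoc R M M M).symm (z ⊗ₜ[R] B.cop))
        = ksign (B.dl * i + B.dl) • z := by
  intro i z hz
  have h := LinearMap.congr_fun B.counit_left z
  rw [LinearMap.comp_apply] at h
  have hlam : B.lam z = ksign (B.dl * i) •
      LinearMap.rTensor M B.mu ((TensorProduct.assoc R M M M).symm (z ⊗ₜ[R] B.cop)) := by
    conv_lhs => rw [B.cofrob_right, hdm]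
    simp only [LinearMap.smul_apply, LinearMap.comp_apply, LinearEquiv.coe_coe,
      LinearMap.flip_apply, TensorProduct.mk_apply, sub_zero]
    rw [signAction_of_mem 𝒜 hz, ksign_zero, one_smul]
    have hsm : ((ksign (B.dl*i) • z) ⊗ₜ[R] B.cop) = ksign (B.dl*i) • (z ⊗ₜ[R] B.cop) :=
      map_zsmul ((TensorProduct.mk R M (M ⊗[R] M)).flip B.cop) _ _
    rw [hsm, map_zsmul, map_zsmul]
  rw [hlam, map_zsmul, ← LinearMap.comp_apply (contrL B.counit), contrL_comp_rTensor,
    aux_cm, contrL_zsmul, LinearMap.smul_apply] at h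
  -- h : ksign (dl*i) • ksign dl • contrL pr (...) = z
  rw [smul_smul_ksign] at h
  exact ksign_cancel h.symm

lemma aux_pr_inj (B : BiunitalCoFrob R 𝒜) (hdm : B.dm = 0) (u v : M)
    (h : B.pr.comp ((TensorProduct.mk R M M).flip u)
        = B.pr.comp ((TensorProduct.mk R M M).flip v)) : u = v := by
  have hu := aux_snake2 𝒜 B hdm u
  have hv := aux_snake2 𝒜 B hdm v
  rw [assoc_tmul_lTensor, ← LinearMap.comp_apply (contrR 𝒜 B.pr (-B.dl)),
    contrR_comp_lTensor] at hu hv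
  rw [← hu, ← hv]
  -- pr ∘ mk.flip u = pr ∘ (flip mk) u ... need: B.pr.comp ((mk).flip u) matching
  rw [h]

lemma aux_cop_lam_unit (B : BiunitalCoFrob R 𝒜) (hdm : B.dm = 0) :
    B.cop = B.lam B.unit := by
  rw [B.cop_def, hdm]
  norm_num [ksign_zero]

lemma aux_cop_mem (B : BiunitalCoFrob R 𝒜) (hdm : B.dm = 0) :
    B.cop ∈ tgrade 𝒜 B.dl := by
  rw [aux_cop_lam_unit 𝒜 B hdm]
  have hu : B.unit ∈ 𝒜 0 := by
    have := B.unit_homog; rwa [hdm, neg_zero] at this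
  have := B.lam_homog 0 B.unit hu
  rwa [zero_add] at this

lemma map_comp_contrR {M₂ : Type} [AddCommGroup M₂] [Module R M₂]
    (ℬ : ℤ → Submodule R M₂) [DirectSum.Decomposition ℬ]
    {N : Type} [AddCommGroup N] [Module R N]
    (g : M₂ →ₗ[R] M) (eg : ℤ) (hg : ∀ i : ℤ, ∀ x ∈ ℬ i, g x ∈ 𝒜 (i + eg))
    (f : N →ₗ[R] R) (d : ℤ) :
    g.comp (contrR ℬ f d) = ksign (d * eg) • (contrR 𝒜 f d).comp (LinearMap.rTensor N g) := by
  apply tensor_ext_homog ℬ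
  intro i x hx y
  simp only [LinearMap.comp_apply, LinearMap.smul_apply, LinearMap.rTensor_tmul,
    contrR_tmul]
  rw [signAction_of_mem ℬ hx, signAction_of_mem 𝒜 (hg i x hx)]
  rw [map_smul, map_zsmul]
  rw [smul_comm (f y) (ksign (d*i)) (g x), smul_comm (f y) (ksign (d*(i+eg))) (g x)]
  rw [smul_smul_ksign]
  exact congrArg (· • f y • g x) (ksign_congr ⟨-(d*eg), by ring⟩)

end Aux
end GradedCoFrob

namespace GradedCoFrob

set_option maxHeartbeats 1000000 in
/-- In a graded 2D open-closed TQFT with closed sector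
`(C,μ_C,λ_C,η_C,ε_C)`, open sector `(A,μ_A,λ_A,η_A,ε_A)` (both biunital coFrobenius
bialgebras whose products have degree `0`), zipper `ζ : C → A` (degree `0`) and cozipper
`ζ* : A → C` (degree `|λ_C|-|λ_A|`), assuming that `ζ` is an algebra map
(`μ_A(ζ⊗ζ) = ζμ_C`, `ζη_C = η_A`) and `(1⊗ζ)c_C = (ζ*⊗1)c_A`, the cozipper is a
coalgebra map: `(ζ*⊗ζ*)λ_A = (-1)^{|ζ*||λ_A|}λ_C ζ*` and `ε_A = ε_C ζ*`. -/
theorem cozipper_coalgebra_map {R : Type} [CommRing R]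
    {C : Type} [AddCommGroup C] [Module R C] [Module.Free R C] [Module.Finite R C]
    {A : Type} [AddCommGroup A] [Module R A] [Module.Free R A] [Module.Finite R A]
    (𝒜 : ℤ → Submodule R C) [DirectSum.Decomposition 𝒜]
    (ℬ : ℤ → Submodule R A) [DirectSum.Decomposition ℬ]
    (BC : BiunitalCoFrob R 𝒜) (BA : BiunitalCoFrob R ℬ)
    (hdmC : BC.dm = 0) (hdmA : BA.dm = 0)
    (zip : C →ₗ[R] A) (cozip : A →ₗ[R] C)
    (hzip_homog : ∀ i : ℤ, ∀ x ∈ 𝒜 i, zip x ∈ ℬ i)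
    (hcozip_homog : ∀ i : ℤ, ∀ x ∈ ℬ i, cozip x ∈ 𝒜 (i + (BC.dl - BA.dl)))
    -- (3) the zipper is an algebra homomorphism
    (hzip_mul : BA.mu.comp (TensorProduct.map zip zip) = zip.comp BC.mu)
    (hzip_unit : zip BC.unit = BA.unit)
    -- (5) the cozipper is dual to the zipper: (1⊗ζ)c_C = (ζ*⊗1)c_A
    (hdual : LinearMap.lTensor C zip BC.cop = LinearMap.rTensor A cozip BA.cop) :
    -- (ζ*⊗ζ*)λ_A = (-1)^{|ζ*||λ_A|} λ_C ζ*
    ((TensorProduct.map (cozip.comp (signAction ℬ (BC.dl - BA.dl))) cozip).comp BA.lam =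
      ksign ((BC.dl - BA.dl) * BA.dl) • (BC.lam.comp cozip)) ∧
    -- ε_A = ε_C ζ*
    (BA.counit = BC.counit.comp cozip) := by
  classical
  set e : ℤ := BC.dl - BA.dl with he
  -- the formula for the cozipper in terms of the closed copairing
  have hZ : ∀ b : A, cozip b = ksign (-BA.dl * e) •
      contrR 𝒜 ((BA.pr.comp ((TensorProduct.mk R A A).flip b)).comp zip) (-BA.dl) BC.cop := by
    intro b
    conv_lhs => rw [← aux_snake2 ℬ BA hdmA b]
    rw [assoc_tmul_lTensor, ← LinearMap.comp_apply cozip (contrR ℬ BA.pr (-BA.dl)),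
      map_comp_contrR 𝒜 ℬ cozip e hcozip_homog BA.pr (-BA.dl),
      LinearMap.smul_apply, LinearMap.comp_apply]
    congr 1
    rw [← LinearMap.comp_apply (LinearMap.rTensor (A ⊗[R] A) cozip),
      LinearMap.rTensor_comp_lTensor, ← LinearMap.lTensor_comp_rTensor,
      LinearMap.comp_apply, ← hdual, ← LinearMap.comp_apply (LinearMap.lTensor C _),
      ← LinearMap.lTensor_comp, ← LinearMap.comp_apply (contrR 𝒜 BA.pr (-BA.dl)),
      contrR_comp_lTensor, LinearMap.comp_assoc]
  -- adjointness of the zipper and cozipper w.r.t. the pairings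
  have hadj : ∀ i : ℤ, ∀ z ∈ 𝒜 i, ∀ b : A,
      BA.pr (zip z ⊗ₜ[R] b) = ksign (e*i + BA.dl + BC.dl) • BC.pr (z ⊗ₜ[R] cozip b) := by
    intro i z hz b
    have hzz := ksign_cancel (aux_snake1 𝒜 BC hdmC i z hz)
    have hQ : ∀ c ∈ tgrade 𝒜 BC.dl,
        BA.pr (zip (contrL BC.pr ((TensorProduct.assoc R C C C).symm (z ⊗ₜ[R] c))) ⊗ₜ[R] b)
          = ksign ((BC.dl*i + BC.dl) + ((e*i + BA.dl + BC.dl) + -BA.dl * e)) •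
            BC.pr (z ⊗ₜ[R] contrR 𝒜 ((BA.pr.comp ((TensorProduct.mk R A A).flip b)).comp zip) (-BA.dl) c) := by
      intro c hc
      apply tgrade_induction 𝒜 hc
      · simp
      · intro u v hu hv
        simp only [TensorProduct.tmul_add, map_add, TensorProduct.add_tmul]
        rw [hu, hv, smul_add]
      · intro j x hx y hy
        rw [TensorProduct.assoc_symm_tmul, contrL_tmul, map_smul,
          ← TensorProduct.smul_tmul', map_smul, contrR_tmul, signAction_of_mem 𝒜 hx]
        have h1 : (z ⊗ₜ[R] (((BA.pr.comp ((TensorProduct.mk R A A).flip b)).comp zip) y •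
            ksign (-BA.dl*j) • x)) = ((BA.pr.comp ((TensorProduct.mk R A A).flip b)).comp zip) y •
            ksign (-BA.dl*j) • (z ⊗ₜ[R] x) := by
          rw [TensorProduct.tmul_smul]
          congr 1
          exact map_zsmul ((TensorProduct.mk R C C) z) _ _
        rw [h1]
        have h2 : ((BA.pr.comp ((TensorProduct.mk R A A).flip b)).comp zip) y
            = BA.pr (zip y ⊗ₜ[R] b) := rfl
        rw [map_smul, map_zsmul, h2]
        by_cases hij : i + j = BC.dl
        · rw [smul_comm (BA.pr (zip y ⊗ₜ[R] b)) (ksign (-BA.dl*j)), smul_smul_ksign]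
          have hone : ksign ((BC.dl*i + BC.dl) + ((e*i + BA.dl + BC.dl) + -BA.dl * e) + -BA.dl*j) = 1 := by
            apply ksign_one_zmod
            have hj : j = BC.dl - i := by omega
            rw [he, hj]
            push_cast
            generalize ((BC.dl : ℤ) : ZMod 2) = p
            generalize ((BA.dl : ℤ) : ZMod 2) = q
            generalize ((i : ℤ) : ZMod 2) = r
            revert p q r
            decide
          rw [hone, one_smul, smul_eq_mul, smul_eq_mul, mul_comm]
        · rw [aux_p_homog 𝒜 BC hdmC i j hij z hz x hx]
          simp
    have hmem := aux_cop_mem 𝒜 BC hdmC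
    have hq := hQ BC.cop hmem
    conv_lhs => rw [hzz, map_zsmul]
    have hsm1 : ((ksign (BC.dl*i + BC.dl) • zip (contrL BC.pr ((TensorProduct.assoc R C C C).symm (z ⊗ₜ[R] BC.cop)))) ⊗ₜ[R] b)
        = ksign (BC.dl*i + BC.dl) • (zip (contrL BC.pr ((TensorProduct.assoc R C C C).symm (z ⊗ₜ[R] BC.cop))) ⊗ₜ[R] b) :=
      map_zsmul ((TensorProduct.mk R A A).flip b) _ _
    rw [hsm1, map_zsmul, hq, smul_smul_ksign]
    conv_rhs => rw [hZ b]
    rw [show (z ⊗ₜ[R] (ksign (-BA.dl * e) • contrR 𝒜 ((BA.pr.comp ((TensorProduct.mk R A A).flip b)).comp zip) (-BA.dl) BC.cop)) = ksign (-BA.dl*e) • (z ⊗ₜ[R] contrR 𝒜 ((BA.pr.comp ((TensorProduct.mk R A A).flip b)).comp zip) (-BA.dl) BC.cop) from map_zsmul ((TensorProduct.mk R C C) z) _ _]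
    rw [map_zsmul, smul_smul_ksign]
    exact congrArg (· • _) (ksign_congr ⟨BC.dl*i + BC.dl, by ring⟩)
  -- Frobenius reciprocity for the cozipper
  have hstar : ∀ j : ℤ, ∀ x ∈ 𝒜 j, ∀ a : A,
      cozip (BA.mu (zip x ⊗ₜ[R] a)) = ksign (e*j) • BC.mu (x ⊗ₜ[R] cozip a) := by
    intro j x hx a
    apply aux_pr_inj 𝒜 BC hdmC
    apply hom_ext_homog 𝒜
    intro i z hz
    simp only [LinearMap.comp_apply, LinearMap.flip_apply, TensorProduct.mk_apply]
    have hL := ksign_cancel (hadj i z hz (BA.mu (zip x ⊗ₜ[R] a)))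
    -- hL : BC.pr (z ⊗ cozip (mu_A (zip x ⊗ a))) = ksign (e*i+dlA+dlC) • BA.pr (zip z ⊗ mu_A (zip x ⊗ a))
    rw [hL]
    have hmustep : z ⊗ₜ[R] (ksign (e*j) • BC.mu (x ⊗ₜ[R] cozip a))
        = ksign (e*j) • (z ⊗ₜ[R] BC.mu (x ⊗ₜ[R] cozip a)) :=
      map_zsmul ((TensorProduct.mk R C C) z) _ _
    rw [hmustep, map_zsmul, aux_p_assoc 𝒜 BC hdmC]
    have hmem2 : BC.mu (z ⊗ₜ[R] x) ∈ 𝒜 (i + j) := by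
      have := BC.mu_homog i j z hz x hx
      rwa [hdmC, add_zero] at this
    have hK := ksign_cancel (hadj (i+j) _ hmem2 a)
    rw [hK]
    have hzm : zip (BC.mu (z ⊗ₜ[R] x)) = BA.mu (zip z ⊗ₜ[R] zip x) := by
      have := LinearMap.congr_fun hzip_mul (z ⊗ₜ[R] x)
      simp only [LinearMap.comp_apply, TensorProduct.map_tmul] at this
      exact this.symm
    rw [hzm, ← aux_p_assoc ℬ BA hdmA, smul_smul_ksign]
    exact congrArg (· • _) (ksign_congr ⟨-(e*j), by ring⟩)
  constructor
  · -- the coproduct part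
    apply LinearMap.ext
    intro a
    rw [LinearMap.comp_apply, LinearMap.smul_apply, LinearMap.comp_apply,
      aux_lam_eq ℬ BA hdmA a]
    have hstepA : ∀ c ∈ tgrade ℬ BA.dl,
        TensorProduct.map (cozip.comp (signAction ℬ e)) cozip
            (LinearMap.lTensor A BA.mu ((TensorProduct.assoc R A A A) (c ⊗ₜ[R] a)))
          = ksign (e * BA.dl) • TensorProduct.map cozip
              ((cozip.comp BA.mu).comp (LinearMap.rTensor A (signAction ℬ e)))
              ((TensorProduct.assoc R A A A) (c ⊗ₜ[R] a)) := by
      intro c hc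
      apply tgrade_induction ℬ hc
      · simp
      · intro u v hu hv
        simp only [TensorProduct.add_tmul, map_add]
        rw [hu, hv, smul_add]
      · intro j x hx y hy
        rw [TensorProduct.assoc_tmul]
        simp only [LinearMap.lTensor_tmul, TensorProduct.map_tmul, LinearMap.comp_apply,
          LinearMap.rTensor_tmul, LinearMap.id_coe, id_eq]
        rw [signAction_of_mem ℬ hx, signAction_of_mem ℬ hy, map_zsmul]
        have hs1 : ((ksign (e*j) • cozip x) ⊗ₜ[R] cozip (BA.mu (y ⊗ₜ[R] a)))
            = ksign (e*j) • (cozip x ⊗ₜ[R] cozip (BA.mu (y ⊗ₜ[R] a))) :=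
          map_zsmul ((TensorProduct.mk R C C).flip (cozip (BA.mu (y ⊗ₜ[R] a)))) _ _
        have hs2 : ((ksign (e*(BA.dl - j)) • y) ⊗ₜ[R] a) = ksign (e*(BA.dl - j)) • (y ⊗ₜ[R] a) :=
          map_zsmul ((TensorProduct.mk R A A).flip a) _ _
        rw [hs1, hs2, map_zsmul, map_zsmul]
        have hs3 : (cozip x ⊗ₜ[R] (ksign (e*(BA.dl - j)) • cozip (BA.mu (y ⊗ₜ[R] a))))
            = ksign (e*(BA.dl - j)) • (cozip x ⊗ₜ[R] cozip (BA.mu (y ⊗ₜ[R] a))) :=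
          map_zsmul ((TensorProduct.mk R C C) (cozip x)) _ _
        rw [hs3, smul_smul_ksign]
        exact congrArg (· • _) (ksign_congr ⟨e*j - e*BA.dl, by ring⟩)
    rw [hstepA BA.cop (aux_cop_mem ℬ BA hdmA)]
    congr 1
    rw [assoc_tmul_lTensor]
    have hmc : TensorProduct.map cozip (((cozip.comp BA.mu).comp (LinearMap.rTensor A (signAction ℬ e)))) ∘ₗ LinearMap.lTensor A ((TensorProduct.mk R A A).flip a)
        = TensorProduct.map cozip ((((cozip.comp BA.mu).comp (LinearMap.rTensor A (signAction ℬ e)))).comp ((TensorProduct.mk R A A).flip a)) := by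
      apply TensorProduct.ext'
      intro u v
      simp
    rw [← LinearMap.comp_apply (TensorProduct.map cozip _), hmc]
    rw [show TensorProduct.map cozip ((((cozip.comp BA.mu).comp (LinearMap.rTensor A (signAction ℬ e)))).comp ((TensorProduct.mk R A A).flip a))
        = LinearMap.lTensor C ((((cozip.comp BA.mu).comp (LinearMap.rTensor A (signAction ℬ e)))).comp ((TensorProduct.mk R A A).flip a)) ∘ₗ LinearMap.rTensor A cozip
        from (LinearMap.lTensor_comp_rTensor ..).symm]
    rw [LinearMap.comp_apply, ← hdual,
      ← LinearMap.comp_apply (LinearMap.lTensor C _), ← LinearMap.lTensor_comp]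
    have hG : ((((cozip.comp BA.mu).comp (LinearMap.rTensor A (signAction ℬ e)))).comp ((TensorProduct.mk R A A).flip a)).comp zip
        = BC.mu.comp ((TensorProduct.mk R C C).flip (cozip a)) := by
      apply hom_ext_homog 𝒜
      intro m y hy
      simp only [LinearMap.comp_apply, LinearMap.flip_apply, TensorProduct.mk_apply,
        LinearMap.rTensor_tmul]
      rw [signAction_of_mem ℬ (hzip_homog m y hy)]
      have hsm2 : ((ksign (e*m) • zip y) ⊗ₜ[R] a) = ksign (e*m) • (zip y ⊗ₜ[R] a) :=
        map_zsmul ((TensorProduct.mk R A A).flip a) _ _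
      rw [hsm2, map_zsmul, map_zsmul, hstar m y hy a, smul_smul_ksign,
        ksign_congr (a := e*m + e*m) (b := 0) ⟨e*m, by ring⟩, ksign_zero, one_smul]
    rw [hG, LinearMap.lTensor_comp, LinearMap.comp_apply, ← assoc_tmul_lTensor,
      ← aux_lam_eq 𝒜 BC hdmC]
  · -- the counit part
    apply LinearMap.ext
    intro a
    rw [LinearMap.comp_apply, hZ a, map_zsmul]
    have hcl : ∀ c ∈ tgrade 𝒜 BC.dl,
        BC.counit (contrR 𝒜 ((BA.pr.comp ((TensorProduct.mk R A A).flip a)).comp zip) (-BA.dl) c)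
          = ksign (BA.dl * BC.dl) •
            ((BA.pr.comp ((TensorProduct.mk R A A).flip a)).comp zip) (contrL BC.counit c) := by
      intro c hc
      apply tgrade_induction 𝒜 hc
      · simp
      · intro u v hu hv
        simp only [map_add]
        rw [hu, hv, smul_add]
      · intro j x hx y hy
        rw [contrR_tmul, contrL_tmul, signAction_of_mem 𝒜 hx, map_smul, map_zsmul,
          map_smul]
        by_cases hj : j = BC.dl
        · subst hj
          rw [ksign_congr (a := -BA.dl * BC.dl) (b := BA.dl * BC.dl) ⟨-(BA.dl*BC.dl), by ring⟩]
          have hcomm : ((BA.pr.comp ((TensorProduct.mk R A A).flip a)).comp zip) y • BC.counit x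
              = BC.counit x • ((BA.pr.comp ((TensorProduct.mk R A A).flip a)).comp zip) y := by
            rw [smul_eq_mul, smul_eq_mul, mul_comm]
          rw [smul_comm (((BA.pr.comp ((TensorProduct.mk R A A).flip a)).comp zip) y)
            (ksign (BA.dl * BC.dl)) (BC.counit x), hcomm]
        · rw [BC.counit_homog j (by omega) x hx]
          simp
    rw [hcl BC.cop (aux_cop_mem 𝒜 BC hdmC)]
    have hcu : contrL BC.counit BC.cop = BC.unit := by
      rw [aux_cop_lam_unit 𝒜 BC hdmC,
        ← LinearMap.comp_apply (contrL BC.counit), BC.counit_left, LinearMap.id_apply]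
    rw [hcu]
    simp only [LinearMap.comp_apply, LinearMap.flip_apply, TensorProduct.mk_apply]
    rw [hzip_unit, BA.pr_def]
    simp only [LinearMap.smul_apply, LinearMap.comp_apply]
    rw [aux_unit_mul ℬ BA hdmA, smul_smul_ksign, smul_smul_ksign]
    have hone : ksign (-BA.dl * e + BA.dl * BC.dl + BA.dl) = 1 := by
      apply ksign_one_zmod
      rw [he]
      push_cast
      generalize ((BC.dl : ℤ) : ZMod 2) = p
      generalize ((BA.dl : ℤ) : ZMod 2) = q
      revert p q
      decide
    rw [hone, one_smul]

end GradedCoFrob
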